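/- Let k ≤ n, let u^(1),...,u^(γ) ∈ ℓ²(ℝ) be mutually orthonormal with (u^(1))_(n),...,(u^(γ))_(n) linearly independent in ℝ^n, let p_1,...,p_γ ∈ ℝ, let θ_n be the point of A_n closest to the origin, and assume ‖θ_n‖ < √n; set r_n := √(n − ‖θ_n‖²)/√n. Then for every Borel set B ⊆ ℝ^k, σ̄_{S_{A_n}}({x ∈ S_{A_n} : π_k(x) ∈ B}) = σ̄_{S_{H_n}}({x ∈ S_{H_n} : π_k(x) ∈ r_n^{-1}(B − π_k(θ_n))}). -/

import Mathlib

open MeasureTheory ProbabilityTheory Filter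

noncomputable section

/-- The Hilbert space `ℓ²(ℝ)` of square-summable real sequences. -/
abbrev Ell2 : Type := lp (fun _ : ℕ => ℝ) 2

/-- Truncation of a square-summable sequence to its first `n` coordinates. -/
def trunc (n : ℕ) (u : Ell2) : EuclideanSpace ℝ (Fin n) :=
  (EuclideanSpace.equiv (Fin n) ℝ).symm fun i => u i

/-- Projection of `ℝ^n` onto the first `k` coordinates (junk `0` beyond `n`). -/
def projk (k n : ℕ) (x : EuclideanSpace ℝ (Fin n)) : EuclideanSpace ℝ (Fin k) :=
  (EuclideanSpace.equiv (Fin k) ℝ).symm fun i => if h : (i : ℕ) < n then x ⟨i, h⟩ else 0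

/-- Extension of a vector of `ℝ^k` to `ℝ^n` by appending zeros. -/
def extendk {k : ℕ} (n : ℕ) (v : EuclideanSpace ℝ (Fin k)) : EuclideanSpace ℝ (Fin n) :=
  (EuclideanSpace.equiv (Fin n) ℝ).symm fun i => if h : (i : ℕ) < k then v ⟨i, h⟩ else 0

/-- The matrix of the orthogonal projection of `ℝ^k` onto the span of `v` (zero if `v = 0`). -/
def projMatrix {k : ℕ} (v : EuclideanSpace ℝ (Fin k)) : Matrix (Fin k) (Fin k) ℝ :=
  (‖v‖ ^ 2)⁻¹ • Matrix.vecMulVec (fun i => v i) (fun i => v i)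

/-- The positive semidefinite square root of a positive semidefinite matrix (the definition
`Matrix.PosSemidef.sqrt` of the older Mathlib, removed since). -/
def Matrix.PosSemidef.sqrt {n : Type*} [Fintype n] [DecidableEq n]
    {A : Matrix n n ℝ} (hA : A.PosSemidef) : Matrix n n ℝ :=
  hA.1.eigenvectorUnitary.1 * Matrix.diagonal ((↑) ∘ (Real.sqrt ·) ∘ hA.1.eigenvalues) *
    (star hA.1.eigenvectorUnitary : Matrix n n ℝ)

/-- The Gaussian measure on `ℝ^k` with mean `ρ` and positive-semidefinite covariance matrix `L`,
realized as the pushforward of the standard Gaussian under `x ↦ ρ + √L x`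
(zero junk measure if `L` is not positive semidefinite). -/
def gaussianOf {k : ℕ} (ρ : EuclideanSpace ℝ (Fin k)) (L : Matrix (Fin k) (Fin k) ℝ) :
    Measure (EuclideanSpace ℝ (Fin k)) :=
  open Classical in
  if hL : L.PosSemidef then
    Measure.map (fun x : Fin k → ℝ =>
        ρ + (EuclideanSpace.equiv (Fin k) ℝ).symm (hL.sqrt.mulVec x))
      (Measure.pi fun _ : Fin k => gaussianReal 0 1)
  else 0

/-- The uniform probability measure on a set `S ⊆ ℝ^n`, namely the `d`-dimensional Hausdorff
measure restricted to `S` and normalized to total mass 1. -/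
def unifProb {n : ℕ} (d : ℝ) (S : Set (EuclideanSpace ℝ (Fin n))) :
    Measure (EuclideanSpace ℝ (Fin n)) :=
  (μH[d] S)⁻¹ • (μH[d]).restrict S

/-- `S_{A_n}`: the sphere of radius `√n` in `ℝ^n` intersected with the affine subspace
`{x : ⟪x, (u i)_(n)⟫ = p i}`. -/
def SA {γ : ℕ} (u : Fin γ → Ell2) (p : Fin γ → ℝ) (n : ℕ) : Set (EuclideanSpace ℝ (Fin n)) :=
  Metric.sphere 0 (Real.sqrt n) ∩ {x | ∀ i, (inner ℝ x (trunc n (u i)) : ℝ) = p i}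

end

noncomputable section

/-- `S_{H_n}`: the sphere of radius `√n` in `ℝ^n` intersected with the linear subspace
`{x : ⟪x, (u i)_(n)⟫ = 0}`. -/
def SH {γ : ℕ} (u : Fin γ → Ell2) (n : ℕ) : Set (EuclideanSpace ℝ (Fin n)) :=
  Metric.sphere 0 (Real.sqrt n) ∩ {x | ∀ i, (inner ℝ x (trunc n (u i)) : ℝ) = 0}


open scoped Pointwise in
private lemma stmt15_haus_add_image {E : Type*} [NormedAddCommGroup E] [MeasurableSpace E]
    [BorelSpace E] (θ : E) (d : ℝ) (s : Set E) : μH[d] ((fun x => x + θ) '' s) = μH[d] s :=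
  (Isometry.of_dist_eq fun a b => dist_add_right a b θ).hausdorffMeasure_image
    (Or.inr fun y => ⟨y - θ, sub_add_cancel y θ⟩) s

open scoped Pointwise in
private lemma stmt15_haus_affine_image {E : Type*} [NormedAddCommGroup E] [NormedSpace ℝ E]
    [MeasurableSpace E] [BorelSpace E] {d : ℝ} (hd : 0 ≤ d) {r : ℝ} (hr : r ≠ 0) (θ : E)
    (s : Set E) : μH[d] ((fun x => θ + r • x) '' s) = ‖r‖₊ ^ d • μH[d] s := by
  have h : (fun x : E => θ + r • x) = (fun y => y + θ) ∘ (fun x : E => r • x) :=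
    funext fun x => add_comm _ _
  rw [h, Set.image_comp, stmt15_haus_add_image, Set.image_smul,
    MeasureTheory.Measure.hausdorffMeasure_smul₀ hd hr]

private lemma stmt15_eq_zero_of_span_top {n γ : ℕ} (V : Fin γ → EuclideanSpace ℝ (Fin n))
    (hspan : Submodule.span ℝ (Set.range V) = ⊤) (x : EuclideanSpace ℝ (Fin n))
    (hx : ∀ i, (inner ℝ x (V i) : ℝ) = 0) : x = 0 := by
  have h : ∀ y ∈ Submodule.span ℝ (Set.range V), (inner ℝ x y : ℝ) = 0 := by
    intro y hy
    induction hy using Submodule.span_induction with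
    | mem y hy => obtain ⟨i, rfl⟩ := hy; exact hx i
    | zero => simp
    | add a b _ _ ha hb => rw [inner_add_right, ha, hb, add_zero]
    | smul t a _ ha => rw [real_inner_smul_right, ha, mul_zero]
  have hxx := h x (by rw [hspan]; trivial)
  rw [real_inner_self_eq_norm_sq] at hxx
  simpa using hxx

private lemma stmt15_perp {n γ : ℕ} {V : Fin γ → EuclideanSpace ℝ (Fin n)} {p : Fin γ → ℝ}
    {θ : EuclideanSpace ℝ (Fin n)}
    (hθA : ∀ i, (inner ℝ θ (V i) : ℝ) = p i)
    (hθmin : ∀ y ∈ {x : EuclideanSpace ℝ (Fin n) | ∀ i, (inner ℝ x (V i) : ℝ) = p i}, ‖θ‖ ≤ ‖y‖)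
    (x : EuclideanSpace ℝ (Fin n)) (hx : ∀ i, (inner ℝ x (V i) : ℝ) = 0) :
    (inner ℝ θ x : ℝ) = 0 := by
  by_cases hx0 : x = 0
  · simp [hx0]
  have hs : 0 < ‖x‖ ^ 2 := by
    have := norm_pos_iff.mpr hx0
    positivity
  have key : ∀ t : ℝ, 0 ≤ 2 * (t * (inner ℝ θ x : ℝ)) + t ^ 2 * ‖x‖ ^ 2 := by
    intro t
    have h1 : ‖θ‖ ≤ ‖θ + t • x‖ := by
      refine hθmin _ fun i => ?_
      rw [inner_add_left, real_inner_smul_left, hx i, hθA i, mul_zero, add_zero]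
    have h2 : ‖θ + t • x‖ ^ 2 = ‖θ‖ ^ 2 + 2 * (inner ℝ θ (t • x) : ℝ) + ‖t • x‖ ^ 2 :=
      norm_add_sq_real θ (t • x)
    rw [real_inner_smul_right, norm_smul] at h2
    have h3 : ‖θ‖ ^ 2 ≤ ‖θ + t • x‖ ^ 2 := by
      have := norm_nonneg θ; nlinarith
    rw [h2] at h3
    have h4 : (‖t‖ * ‖x‖) ^ 2 = t ^ 2 * ‖x‖ ^ 2 := by
      rw [mul_pow]; simp [sq_abs]
    nlinarith
  have hc := key (-(inner ℝ θ x : ℝ) / ‖x‖ ^ 2)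
  have hsq : (inner ℝ θ x : ℝ) ^ 2 ≤ 0 := by
    have h5 : (-(inner ℝ θ x : ℝ) / ‖x‖ ^ 2) ^ 2 * ‖x‖ ^ 2 = (inner ℝ θ x : ℝ) ^ 2 / ‖x‖ ^ 2 := by
      field_simp [hs.ne']
    rw [h5] at hc
    have h6 : 2 * (-(inner ℝ θ x : ℝ) / ‖x‖ ^ 2 * (inner ℝ θ x : ℝ)) =
        -2 * ((inner ℝ θ x : ℝ) ^ 2 / ‖x‖ ^ 2) := by field_simp [hs.ne']
    rw [h6] at hc
    have h7 : 0 ≤ -((inner ℝ θ x : ℝ) ^ 2 / ‖x‖ ^ 2) := by linarith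
    have hqs : (inner ℝ θ x : ℝ) ^ 2 / ‖x‖ ^ 2 * ‖x‖ ^ 2 = (inner ℝ θ x : ℝ) ^ 2 :=
      div_mul_cancel₀ _ hs.ne'
    nlinarith [h7, hs, hqs]
  exact pow_eq_zero_iff (n := 2) (by norm_num) |>.mp (le_antisymm hsq (sq_nonneg _))

private lemma stmt15_projk_affine {k n : ℕ} (θ : EuclideanSpace ℝ (Fin n)) (r : ℝ)
    (x : EuclideanSpace ℝ (Fin n)) :
    projk k n (θ + r • x) = projk k n θ + r • projk k n x := by
  ext i
  simp only [projk, EuclideanSpace.equiv, PiLp.add_apply, PiLp.smul_apply, smul_eq_mul,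
    PiLp.continuousLinearEquiv_symm_apply, PiLp.toLp_apply]
  split <;> simp

private lemma stmt15_projk_meas {k n : ℕ} : Measurable (projk k n) := by
  have h : Measurable fun x : EuclideanSpace ℝ (Fin n) =>
      (fun i : Fin k => if h : (i : ℕ) < n then x ⟨i, h⟩ else 0) :=
    measurable_pi_lambda _ fun i => by
      by_cases h : (i : ℕ) < n
      · simp only [h, dite_true]; exact (EuclideanSpace.proj (𝕜 := ℝ) (⟨i, h⟩ : Fin n)).continuous.measurable
      · simp [h]
  exact ((EuclideanSpace.equiv (Fin k) ℝ).symm.continuous.measurable).comp h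


/-- **Translation–scaling relation between the sliced-sphere measures.** Let `k ≤ n`, let
`u⁽¹⁾,…,u⁽ᵞ⁾ ∈ ℓ²(ℝ)` be mutually orthonormal with linearly independent truncations
`(u⁽ⁱ⁾)_(n)`, let `θₙ` be the point of `A_n` closest to the origin with `‖θₙ‖ < √n`, and set
`rₙ = √(n − ‖θₙ‖²)/√n`. Then for every Borel `B ⊆ ℝ^k`,
`σ̄_{S_{A_n}}(π_k ∈ B) = σ̄_{S_{H_n}}(π_k ∈ rₙ⁻¹(B − π_k(θₙ)))`. -/
theorem stmt15 {k n γ : ℕ} (hkn : k ≤ n) (u : Fin γ → Ell2) (hu : Orthonormal ℝ u)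
    (hind : LinearIndependent ℝ (fun i => trunc n (u i))) (p : Fin γ → ℝ)
    (θ : EuclideanSpace ℝ (Fin n))
    (hθA : θ ∈ {x : EuclideanSpace ℝ (Fin n) | ∀ i, (inner ℝ x (trunc n (u i)) : ℝ) = p i})
    (hθmin : ∀ y ∈ {x : EuclideanSpace ℝ (Fin n) | ∀ i, (inner ℝ x (trunc n (u i)) : ℝ) = p i},
      ‖θ‖ ≤ ‖y‖)
    (hθn : ‖θ‖ < Real.sqrt n)
    (B : Set (EuclideanSpace ℝ (Fin k))) (hB : MeasurableSet B) :
    unifProb ((n : ℝ) - γ - 1) (SA u p n) {x | projk k n x ∈ B} =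
      unifProb ((n : ℝ) - γ - 1) (SH u n)
        {x | projk k n x ∈
          (fun b => (Real.sqrt ((n : ℝ) - ‖θ‖ ^ 2) / Real.sqrt n)⁻¹ • (b - projk k n θ)) '' B} := by
  classical
  set V : Fin γ → EuclideanSpace ℝ (Fin n) := fun i => trunc n (u i) with hV
  have hθA' : ∀ i, (inner ℝ θ (V i) : ℝ) = p i := hθA
  have hsn : 0 < Real.sqrt n := lt_of_le_of_lt (norm_nonneg θ) hθn
  have hnpos : 0 < (n : ℝ) := Real.sqrt_pos.mp hsn
  have hθsq : ‖θ‖ ^ 2 < (n : ℝ) := by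
    have h := Real.sq_sqrt hnpos.le
    nlinarith [norm_nonneg θ, hθn]
  set r : ℝ := Real.sqrt ((n : ℝ) - ‖θ‖ ^ 2) / Real.sqrt n with hrdef
  have hrpos : 0 < r := div_pos (Real.sqrt_pos.mpr (by linarith)) hsn
  have hr2 : r ^ 2 * n = (n : ℝ) - ‖θ‖ ^ 2 := by
    rw [hrdef, div_pow, Real.sq_sqrt (by linarith : (0:ℝ) ≤ (n : ℝ) - ‖θ‖ ^ 2),
      Real.sq_sqrt hnpos.le]
    field_simp
  set T : EuclideanSpace ℝ (Fin n) → EuclideanSpace ℝ (Fin n) := fun x => θ + r • x with hT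
  have hperp := stmt15_perp hθA' hθmin
  -- T maps SH onto SA
  have hnorm_sq : ∀ y : EuclideanSpace ℝ (Fin n), ‖y‖ ^ 2 = (n : ℝ) → ‖y‖ = Real.sqrt n := by
    intro y hy
    rw [← hy, Real.sqrt_sq (norm_nonneg _)]
  have hTmem : T '' SH u n = SA u p n := by
    ext y
    constructor
    · rintro ⟨x, ⟨hxs, hxH⟩, rfl⟩
      rw [mem_sphere_zero_iff_norm] at hxs
      have hxn : ‖x‖ ^ 2 = (n : ℝ) := by rw [hxs, Real.sq_sqrt hnpos.le]
      have hxHi : ∀ i, (inner ℝ x (V i) : ℝ) = 0 := hxH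
      constructor
      · rw [mem_sphere_zero_iff_norm]
        refine hnorm_sq _ ?_
        have h2 : ‖θ + r • x‖ ^ 2 = ‖θ‖ ^ 2 + 2 * (inner ℝ θ (r • x) : ℝ) + ‖r • x‖ ^ 2 :=
          norm_add_sq_real θ (r • x)
        rw [real_inner_smul_right, hperp x hxHi, norm_smul] at h2
        have : (‖r‖ * ‖x‖) ^ 2 = r ^ 2 * ‖x‖ ^ 2 := by rw [mul_pow]; simp [sq_abs]
        rw [this, hxn] at h2
        rw [h2]; rw [hr2]; ring
      · intro i
        show (inner ℝ (θ + r • x) (V i) : ℝ) = p i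
        rw [inner_add_left, real_inner_smul_left, hxHi i, hθA' i, mul_zero, add_zero]
    · rintro ⟨hys, hyA⟩
      rw [mem_sphere_zero_iff_norm] at hys
      have hyAi : ∀ i, (inner ℝ y (V i) : ℝ) = p i := hyA
      have hdH : ∀ i, (inner ℝ (y - θ) (V i) : ℝ) = 0 := fun i => by
        rw [inner_sub_left, hyAi i, hθA' i, sub_self]
      have hyn : ‖y‖ ^ 2 = (n : ℝ) := by rw [hys, Real.sq_sqrt hnpos.le]
      have hdn : ‖y - θ‖ ^ 2 = (n : ℝ) - ‖θ‖ ^ 2 := by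
        have h2 : ‖θ + (y - θ)‖ ^ 2 = ‖θ‖ ^ 2 + 2 * (inner ℝ θ (y - θ) : ℝ) + ‖y - θ‖ ^ 2 :=
          norm_add_sq_real θ (y - θ)
        rw [hperp _ hdH, add_sub_cancel] at h2
        rw [hyn] at h2
        linarith
      refine ⟨r⁻¹ • (y - θ), ⟨?_, ?_⟩, ?_⟩
      · rw [mem_sphere_zero_iff_norm]
        refine hnorm_sq _ ?_
        rw [norm_smul, mul_pow, norm_inv, Real.norm_eq_abs, abs_of_pos hrpos, hdn, ← hr2]
        field_simp
      · intro i
        show (inner ℝ (r⁻¹ • (y - θ)) (V i) : ℝ) = 0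
        rw [real_inner_smul_left, hdH i, mul_zero]
      · show θ + r • r⁻¹ • (y - θ) = y
        rw [smul_inv_smul₀ hrpos.ne']
        abel
  -- the right-hand side condition set is the preimage under T of the left one
  set E : Set (EuclideanSpace ℝ (Fin n)) := {x | projk k n x ∈ B} with hEdef
  have hF : {x : EuclideanSpace ℝ (Fin n) |
      projk k n x ∈ (fun b => r⁻¹ • (b - projk k n θ)) '' B} = T ⁻¹' E := by
    ext x
    simp only [Set.mem_setOf_eq, Set.mem_preimage, Set.mem_image, hEdef, hT,
      stmt15_projk_affine]
    constructor
    · rintro ⟨b, hb, hbe⟩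
      have : projk k n θ + r • projk k n x = b := by
        rw [← hbe, smul_inv_smul₀ hrpos.ne']
        abel
      rwa [this]
    · intro hb
      exact ⟨projk k n θ + r • projk k n x, hb, by
        rw [add_sub_cancel_left, inv_smul_smul₀ hrpos.ne']⟩
  have hEmeas : MeasurableSet E := stmt15_projk_meas hB
  have hTcont : Continuous T := continuous_const.add (continuous_id.const_smul r)
  have hFmeas : MeasurableSet (T ⁻¹' E) := hEmeas.preimage hTcont.measurable
  have hγle : γ ≤ n := by
    have := hind.fintype_card_le_finrank
    simpa [finrank_euclideanSpace_fin] using this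
  set d : ℝ := (n : ℝ) - γ - 1 with hd
  rw [hF]
  by_cases hγ : γ < n
  · -- main case : d ≥ 0
    have hd0 : 0 ≤ d := by
      have : (γ : ℝ) + 1 ≤ n := by exact_mod_cast hγ
      simp only [hd]; linarith
    set c : ENNReal := ((‖r‖₊ ^ d : NNReal) : ENNReal) with hc
    have hc0 : c ≠ 0 := by
      simp only [hc, ne_eq, ENNReal.coe_eq_zero]
      exact (NNReal.rpow_pos (nnnorm_pos.mpr hrpos.ne')).ne'
    have hctop : c ≠ ⊤ := ENNReal.coe_ne_top
    have himg : ∀ s : Set (EuclideanSpace ℝ (Fin n)), μH[d] (T '' s) = c * μH[d] s := by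
      intro s
      rw [hT, stmt15_haus_affine_image hd0 hrpos.ne' θ s]
      rfl
    have h1 : μH[d] (SA u p n) = c * μH[d] (SH u n) := by rw [← hTmem, himg]
    have hset : E ∩ SA u p n = T '' (T ⁻¹' E ∩ SH u n) := by
      rw [Set.inter_comm (T ⁻¹' E), Set.image_inter_preimage, hTmem, Set.inter_comm]
    have h2 : μH[d] (E ∩ SA u p n) = c * μH[d] (T ⁻¹' E ∩ SH u n) := by
      rw [hset, himg]
    show unifProb d (SA u p n) E = unifProb d (SH u n) (T ⁻¹' E)
    rw [unifProb, unifProb, Measure.smul_apply, Measure.smul_apply,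
      Measure.restrict_apply hEmeas, Measure.restrict_apply hFmeas,
      smul_eq_mul, smul_eq_mul, h1, h2,
      ENNReal.mul_inv (Or.inl hc0) (Or.inl hctop), mul_mul_mul_comm,
      ENNReal.inv_mul_cancel hc0 hctop, one_mul]
  · -- degenerate case : γ = n, both sets are empty
    have hγn : γ = n := le_antisymm hγle (not_lt.mp hγ)
    have hnn : 0 < n := by exact_mod_cast hnpos
    have : Nonempty (Fin γ) := by rw [hγn]; exact ⟨⟨0, hnn⟩⟩
    have hspan : Submodule.span ℝ (Set.range V) = ⊤ :=
      hind.span_eq_top_of_card_eq_finrank (by simp [finrank_euclideanSpace_fin, hγn])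
    have hSH : SH u n = ∅ := by
      ext x
      simp only [SH, Set.mem_inter_iff, Set.mem_empty_iff_false, iff_false, not_and,
        Set.mem_setOf_eq]
      intro hxs hxH
      rw [mem_sphere_zero_iff_norm] at hxs
      have := stmt15_eq_zero_of_span_top V hspan x hxH
      rw [this] at hxs
      simp at hxs
      exact absurd hxs.symm hsn.ne'
    have hSA : SA u p n = ∅ := by
      ext y
      simp only [SA, Set.mem_inter_iff, Set.mem_empty_iff_false, iff_false, not_and,
        Set.mem_setOf_eq]
      intro hys hyA
      rw [mem_sphere_zero_iff_norm] at hys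
      have hdH : ∀ i, (inner ℝ (y - θ) (V i) : ℝ) = 0 := fun i => by
        rw [inner_sub_left, hyA i, hθA' i, sub_self]
      have := stmt15_eq_zero_of_span_top V hspan (y - θ) hdH
      have hyθ : y = θ := by
        have := sub_eq_zero.mp this
        exact this
      rw [hyθ] at hys
      exact absurd hys hθn.ne
    simp [unifProb, hSA, hSH]


end
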